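/- If p, q → 0 in such a way that p = o(q^{2^d}), then for bootstrap percolation on ℤ^d with threshold r = d, the probability that the origin is eventually occupied tends to 0. More precisely: with probability tending to 1 there exist integers M < 0 < N such that no site of the box {0,1}^{d-1} × [M,N] is initially occupied while every site of {0,1}^{d-1} × {M} and {0,1}^{d-1} × {N} is closed; on this event the origin never becomes occupied. -/

import Mathlib

open MeasureTheory Filter Topology

/-- Sites of the lattice `ℤ^d`. -/
abbrev SiteD (d : ℕ) := Fin d → ℤ

/-- Nearest-neighbor adjacency on `ℤ^d`: `‖u - v‖₁ = 1`. -/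
def AdjD {d : ℕ} (u v : SiteD d) : Prop := (∑ i, |u i - v i|) = 1

/-- The standard bootstrap rule with threshold `r`: at least `r` occupied neighbors. -/
def StdRule {d : ℕ} (r : ℕ) (occ : Set (SiteD d)) (x : SiteD d) : Prop :=
  ∃ T : Finset (SiteD d), r ≤ T.card ∧ ∀ y ∈ T, AdjD x y ∧ y ∈ occ

/-- Bootstrap dynamics for a rule `rule`, closed set `C`, initially occupied set `O`. -/
def occSeqD {d : ℕ} (rule : Set (SiteD d) → SiteD d → Prop)
    (C O : Set (SiteD d)) : ℕ → Set (SiteD d)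
  | 0 => O
  | t + 1 => occSeqD rule C O t ∪ {x | x ∉ C ∧ rule (occSeqD rule C O t) x}

/-- The blocked-tube event: there are `M < 0 < N` such that no site of the box
`{0,1}^{d-1} × [M,N]` is initially occupied while both end slabs
`{0,1}^{d-1} × {M}` and `{0,1}^{d-1} × {N}` are entirely closed.
States: `0` = closed, `1` = open and initially occupied, `2` = open unoccupied. -/
def TubeEvent (d : ℕ) (hd : 2 ≤ d) (σ : SiteD d → Fin 3) : Prop :=
  ∃ M N : ℤ, M < 0 ∧ 0 < N ∧
    (∀ x : SiteD d,
      ((∀ i : Fin d, (i : ℕ) < d - 1 → (x i = 0 ∨ x i = 1)) ∧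
        M ≤ x ⟨d - 1, by omega⟩ ∧ x ⟨d - 1, by omega⟩ ≤ N) → σ x ≠ 1) ∧
    (∀ x : SiteD d,
      ((∀ i : Fin d, (i : ℕ) < d - 1 → (x i = 0 ∨ x i = 1)) ∧
        (x ⟨d - 1, by omega⟩ = M ∨ x ⟨d - 1, by omega⟩ = N)) → σ x = 0)

lemma adj_struct {d : ℕ} {x y : SiteD d} (h : AdjD x y) :
    ∃ i : Fin d, (x i - y i = 1 ∨ x i - y i = -1) ∧ ∀ j, j ≠ i → x j = y j := by
  unfold AdjD at h
  have hex : ∃ i : Fin d, x i ≠ y i := by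
    by_contra hc
    push_neg at hc
    simp [hc] at h
  obtain ⟨i, hi⟩ := hex
  have hsum : |x i - y i| + ∑ j ∈ Finset.univ.erase i, |x j - y j| = 1 := by
    rw [Finset.add_sum_erase Finset.univ (fun j => |x j - y j|) (Finset.mem_univ i)]
    exact h
  have h1 : (1:ℤ) ≤ |x i - y i| := Int.one_le_abs (sub_ne_zero.mpr hi)
  have hre : (0:ℤ) ≤ ∑ j ∈ Finset.univ.erase i, |x j - y j| :=
    Finset.sum_nonneg fun j _ => abs_nonneg _
  have hrest0 : ∑ j ∈ Finset.univ.erase i, |x j - y j| = 0 := by omega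
  have hone : |x i - y i| = 1 := by omega
  have heach := (Finset.sum_eq_zero_iff_of_nonneg (fun j _ => abs_nonneg (x j - y j))).mp hrest0
  refine ⟨i, (abs_eq (by norm_num)).mp hone, fun j hj => ?_⟩
  have := abs_eq_zero.mp (heach j (Finset.mem_erase.mpr ⟨hj, Finset.mem_univ j⟩))
  omega

lemma closed_not_occ {d : ℕ} {C O : Set (SiteD d)} (hOC : ∀ x, x ∈ O → x ∉ C) :
    ∀ t x, x ∈ C → x ∉ occSeqD (StdRule d) C O t := by
  intro t
  induction t with
  | zero => intro x hx hmem; exact hOC x hmem hx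
  | succ t ih =>
    intro x hx hmem
    rcases hmem with hmem | hmem
    · exact ih x hx hmem
    · exact hmem.1 hx

lemma tube_blocked {d : ℕ} (hd : 2 ≤ d) (C O : Set (SiteD d)) (M N : ℤ)
    (hM : M < 0) (hN : 0 < N)
    (hOC : ∀ x, x ∈ O → x ∉ C)
    (hO : ∀ x : SiteD d, (∀ i : Fin d, (i : ℕ) < d - 1 → (x i = 0 ∨ x i = 1)) →
      M ≤ x ⟨d - 1, by omega⟩ → x ⟨d - 1, by omega⟩ ≤ N → x ∉ O)
    (hC : ∀ x : SiteD d, (∀ i : Fin d, (i : ℕ) < d - 1 → (x i = 0 ∨ x i = 1)) →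
      (x ⟨d - 1, by omega⟩ = M ∨ x ⟨d - 1, by omega⟩ = N) → x ∈ C) :
    ∀ t, ∀ x : SiteD d, (∀ i : Fin d, (i : ℕ) < d - 1 → (x i = 0 ∨ x i = 1)) →
      M < x ⟨d - 1, by omega⟩ → x ⟨d - 1, by omega⟩ < N →
      x ∉ occSeqD (StdRule d) C O t := by
  have hdl : d - 1 < d := by omega
  set l : Fin d := ⟨d - 1, hdl⟩ with hl
  intro t
  induction t with
  | zero =>
    intro x hx1 hx2 hx3 hmem
    exact hO x hx1 (le_of_lt hx2) (le_of_lt hx3) hmem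
  | succ t ih =>
    intro x hx1 hx2 hx3 hmem
    rcases hmem with hmem | ⟨hxC, T, hcard, hT⟩
    · exact ih x hx1 hx2 hx3 hmem
    have key : ∀ y ∈ T, ∃ i : Fin d, (i : ℕ) < d - 1 ∧ (∀ j, j ≠ i → y j = x j) ∧
        y i = 3 * x i - 1 := by
      intro y hy
      obtain ⟨hadj, hyocc⟩ := hT y hy
      obtain ⟨i, hi1, hi2⟩ := adj_struct hadj
      have ynotube : ¬ ((∀ j : Fin d, (j : ℕ) < d - 1 → (y j = 0 ∨ y j = 1)) ∧
          M ≤ y l ∧ y l ≤ N) := by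
        rintro ⟨hy1, hy2, hy3⟩
        rcases eq_or_lt_of_le hy2 with hEq | hlt
        · exact closed_not_occ hOC t y (hC y hy1 (Or.inl hEq.symm)) hyocc
        rcases eq_or_lt_of_le hy3 with hEq | hlt'
        · exact closed_not_occ hOC t y (hC y hy1 (Or.inr hEq)) hyocc
        · exact ih y hy1 hlt hlt' hyocc
      have hineql : i ≠ l := by
        intro hc
        apply ynotube
        refine ⟨fun j hj => ?_, ?_, ?_⟩
        · have hji : j ≠ i := by
            intro hji
            rw [hc] at hji
            rw [hji] at hj
            simp only [hl] at hj
            omega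
          rw [← hi2 j hji]; exact hx1 j hj
        · rw [hc] at hi1; omega
        · rw [hc] at hi1; omega
      have hile : (i : ℕ) < d - 1 := by
        have h1 := i.isLt
        have h2 : (i : ℕ) ≠ d - 1 := fun hcc => hineql (Fin.ext (by simp [hl, hcc]))
        omega
      have hyi : ¬ (y i = 0 ∨ y i = 1) := by
        intro hyiv
        apply ynotube
        have hll : y l = x l := (hi2 l (Ne.symm hineql)).symm
        refine ⟨fun j hj => ?_, by omega, by omega⟩
        by_cases hji : j = i
        · rw [hji]; exact hyiv
        · rw [← hi2 j hji]; exact hx1 j hj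
      refine ⟨i, hile, fun j hj => (hi2 j hj).symm, ?_⟩
      rcases hx1 i hile with h0 | h0 <;> rw [h0] at hi1 ⊢ <;> omega
    classical
    let ψ : SiteD d → Fin d := fun y =>
      if h : ∃ i : Fin d, (i : ℕ) < d - 1 ∧ (∀ j, j ≠ i → y j = x j) ∧ y i = 3 * x i - 1
      then h.choose else ⟨0, by omega⟩
    have hψ : ∀ y ∈ T, ((ψ y : ℕ) < d - 1 ∧ (∀ j, j ≠ ψ y → y j = x j) ∧
        y (ψ y) = 3 * x (ψ y) - 1) := by
      intro y hy
      have h := key y hy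
      simp only [ψ, dif_pos h]
      exact h.choose_spec
    have hmaps : ∀ y ∈ T, ψ y ∈ Finset.univ.erase l := by
      intro y hy
      refine Finset.mem_erase.mpr ⟨?_, Finset.mem_univ _⟩
      intro hc
      have h1 := (hψ y hy).1
      rw [hc] at h1
      simp only [hl] at h1
      omega
    have hcard2 : (Finset.univ.erase l).card < T.card := by
      rw [Finset.card_erase_of_mem (Finset.mem_univ l)]
      simp only [Finset.card_univ, Fintype.card_fin]
      omega
    obtain ⟨y, hy, y', hy', hne, heq⟩ :=
      Finset.exists_ne_map_eq_of_card_lt_of_maps_to hcard2 hmaps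
    apply hne
    obtain ⟨_, hy2, hy3⟩ := hψ y hy
    obtain ⟨_, hy2', hy3'⟩ := hψ y' hy'
    funext j
    by_cases hj : j = ψ y
    · rw [hj, hy3, heq, hy3']
    · rw [hy2 j hj, hy2' j (by rw [← heq]; exact hj)]

/-- A site of the tube cross-section `{0,1}^{d-1}` at height `z`. -/
def tsite (d : ℕ) (ε : Fin (d-1) → Fin 2) (z : ℤ) : SiteD d :=
  fun i => if h : (i : ℕ) < d - 1 then ((ε ⟨i, h⟩ : ℕ) : ℤ) else z

/-- The slab `{0,1}^{d-1} × {z}`. -/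
def slab (d : ℕ) (z : ℤ) : Finset (SiteD d) :=
  Finset.image (fun ε => tsite d ε z) Finset.univ

lemma tsite_last {d : ℕ} (hd : 1 ≤ d) (ε : Fin (d-1) → Fin 2) (z : ℤ) :
    tsite d ε z ⟨d - 1, by omega⟩ = z := by
  simp [tsite]

lemma tsite_inj2 {d : ℕ} (hd : 1 ≤ d) {ε ε' : Fin (d-1) → Fin 2} {z z' : ℤ}
    (h : tsite d ε z = tsite d ε' z') : ε = ε' ∧ z = z' := by
  constructor
  · funext i
    have hi : (i : ℕ) < d - 1 := i.isLt
    have := congrFun h ⟨i, by omega⟩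
    simp only [tsite, dif_pos hi] at this
    exact Fin.ext (by exact_mod_cast this)
  · have := congrFun h ⟨d - 1, by omega⟩
    simpa [tsite] using this

lemma mem_slab {d : ℕ} (hd : 1 ≤ d) {x : SiteD d} {z : ℤ} :
    x ∈ slab d z ↔
      ((∀ i : Fin d, (i : ℕ) < d - 1 → (x i = 0 ∨ x i = 1)) ∧ x ⟨d - 1, by omega⟩ = z) := by
  constructor
  · rintro hx
    obtain ⟨ε, -, rfl⟩ := Finset.mem_image.mp hx
    refine ⟨fun i hi => ?_, tsite_last hd ε z⟩
    simp only [tsite, dif_pos hi]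
    rcases Fin.exists_fin_two.mp ⟨ε ⟨i, hi⟩, rfl⟩ with h | h
    all_goals omega
  · rintro ⟨h1, h2⟩
    refine Finset.mem_image.mpr ⟨fun i => if x ⟨i, by omega⟩ = 0 then 0 else 1,
      Finset.mem_univ _, ?_⟩
    funext i
    by_cases hi : (i : ℕ) < d - 1
    · simp only [tsite, dif_pos hi]
      rcases h1 i hi with h0 | h0
      · have : x ⟨(i:ℕ), by omega⟩ = 0 := by rwa [show (⟨(i:ℕ), by omega⟩ : Fin d) = i from rfl]
        simp [this, h0]
      · have : x ⟨(i:ℕ), by omega⟩ = 1 := by rwa [show (⟨(i:ℕ), by omega⟩ : Fin d) = i from rfl]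
        simp [this, h0]
    · simp only [tsite, dif_neg hi]
      have : i = ⟨d - 1, by omega⟩ := Fin.ext (by have := i.isLt; simp; omega)
      rw [this, h2]
lemma card_slab {d : ℕ} (hd : 1 ≤ d) (z : ℤ) : (slab d z).card = 2 ^ (d - 1) := by
  rw [slab, Finset.card_image_of_injective _ (fun ε ε' h => (tsite_inj2 hd h).1),
    Finset.card_univ, Fintype.card_fun, Fintype.card_fin, Fintype.card_fin]

/-- The per-site weight. -/
noncomputable def wgt (pr qr : ℝ) (v : Fin 3) : ENNReal :=
  if v = 0 then ENNReal.ofReal qr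
  else if v = 1 then ENNReal.ofReal pr
  else ENNReal.ofReal (1 - pr - qr)

lemma wgt_total {pr qr : ℝ} (hp0 : 0 ≤ pr) (hq0 : 0 ≤ qr) (hpq : pr + qr ≤ 1) :
    ∑ v : Fin 3, wgt pr qr v = 1 := by
  have w0 : wgt pr qr 0 = ENNReal.ofReal qr := rfl
  have w1 : wgt pr qr 1 = ENNReal.ofReal pr := rfl
  have w2 : wgt pr qr 2 = ENNReal.ofReal (1 - pr - qr) := rfl
  rw [Fin.sum_univ_three, w0, w1, w2, ← ENNReal.ofReal_add hq0 hp0,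
    ← ENNReal.ofReal_add (by linarith) (by linarith),
    show qr + pr + (1 - pr - qr) = 1 by ring, ENNReal.ofReal_one]

/-- Main estimate: the probability that each of `K` disjoint slabs contains a
non-closed site is at most `(1 - q^(2^(d-1)))^K`. -/
lemma slab_bound {d : ℕ} (hd : 1 ≤ d) {Ω : Type*} [MeasurableSpace Ω] (ν : Measure Ω)
    (st : SiteD d → Ω → Fin 3) (pr qr : ℝ)
    (hp0 : 0 ≤ pr) (hq0 : 0 ≤ qr) (hpq : pr + qr ≤ 1)
    (hprod : ∀ (F : Finset (SiteD d)) (f : SiteD d → Fin 3),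
      ν {ω | ∀ x ∈ F, st x ω = f x} = ∏ x ∈ F, wgt pr qr (f x))
    (K : ℕ) (Z : Fin K → ℤ) (hZ : Function.Injective Z) :
    ν {ω | ∀ j : Fin K, ∃ x ∈ slab d (Z j), st x ω ≠ 0} ≤
      ENNReal.ofReal ((1 - qr ^ 2 ^ (d - 1)) ^ K) := by
  classical
  set E := (Fin (d-1) → Fin 2)
  set site' : Fin K × E → SiteD d := fun pt => tsite d pt.2 (Z pt.1) with hsite'
  have hsi : Function.Injective site' := by
    rintro ⟨j, ε⟩ ⟨j', ε'⟩ h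
    obtain ⟨h1, h2⟩ := tsite_inj2 hd h
    exact Prod.ext (hZ h2) h1
  set S : Finset ((Fin K × E) → Fin 3) :=
    Finset.univ.filter (fun g => ∀ j : Fin K, ∃ ε : E, g (j, ε) ≠ 0) with hS
  -- inclusion into a union of cylinders
  have hincl : {ω | ∀ j : Fin K, ∃ x ∈ slab d (Z j), st x ω ≠ 0} ⊆
      ⋃ g ∈ S, {ω | ∀ pt : Fin K × E, st (site' pt) ω = g pt} := by
    intro ω hω
    refine Set.mem_iUnion.mpr ⟨fun pt => st (site' pt) ω,
      Set.mem_iUnion.mpr ⟨?_, fun pt => rfl⟩⟩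
    refine Finset.mem_filter.mpr ⟨Finset.mem_univ _, fun j => ?_⟩
    obtain ⟨x, hx, hne⟩ := hω j
    obtain ⟨ε, -, rfl⟩ := Finset.mem_image.mp hx
    exact ⟨ε, hne⟩
  -- measure of cylinders
  have hcyl : ∀ g : (Fin K × E) → Fin 3,
      ν {ω | ∀ pt : Fin K × E, st (site' pt) ω = g pt} = ∏ pt : Fin K × E, wgt pr qr (g pt) := by
    intro g
    set f : SiteD d → Fin 3 := Function.extend site' g (fun _ => 0) with hf
    have hset : {ω | ∀ pt : Fin K × E, st (site' pt) ω = g pt} =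
        {ω | ∀ x ∈ Finset.image site' Finset.univ, st x ω = f x} := by
      ext ω
      constructor
      · intro h x hx
        obtain ⟨pt, -, rfl⟩ := Finset.mem_image.mp hx
        rw [hf, hsi.extend_apply]
        exact h pt
      · intro h pt
        have := h (site' pt) (Finset.mem_image_of_mem _ (Finset.mem_univ _))
        rwa [hf, hsi.extend_apply] at this
    rw [hset, hprod, Finset.prod_image (fun a _ b _ h => hsi h)]
    exact Finset.prod_congr rfl fun pt _ => by rw [hf, hsi.extend_apply]
  calc ν {ω | ∀ j : Fin K, ∃ x ∈ slab d (Z j), st x ω ≠ 0}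
      ≤ ∑ g ∈ S, ν {ω | ∀ pt : Fin K × E, st (site' pt) ω = g pt} :=
        le_trans (measure_mono hincl) (measure_biUnion_finset_le _ _)
    _ = ∑ g ∈ S, ∏ pt : Fin K × E, wgt pr qr (g pt) :=
        Finset.sum_congr rfl fun g _ => hcyl g
    _ = ENNReal.ofReal ((1 - qr ^ 2 ^ (d - 1)) ^ K) := by
      -- factorize
      set T : Finset (E → Fin 3) := Finset.univ.filter (fun c => ∃ ε : E, c ε ≠ 0) with hT
      have hcurry : ∑ g ∈ S, ∏ pt : Fin K × E, wgt pr qr (g pt) =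
          ∑ h ∈ Fintype.piFinset (fun _ : Fin K => T), ∏ j : Fin K, ∏ ε : E, wgt pr qr (h j ε) := by
        refine Finset.sum_nbij' (fun g => fun j ε => g (j, ε)) (fun h => fun pt => h pt.1 pt.2)
          ?_ ?_ ?_ ?_ ?_
        · intro g hg
          rw [Fintype.mem_piFinset]
          intro j
          refine Finset.mem_filter.mpr ⟨Finset.mem_univ _, ?_⟩
          exact (Finset.mem_filter.mp hg).2 j
        · intro h hh
          refine Finset.mem_filter.mpr ⟨Finset.mem_univ _, fun j => ?_⟩
          have := Fintype.mem_piFinset.mp hh j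
          exact (Finset.mem_filter.mp this).2
        · intro g hg; rfl
        · intro h hh; rfl
        · intro g hg
          rw [Fintype.prod_prod_type]
      rw [hcurry,
        show (∑ h ∈ Fintype.piFinset fun _ : Fin K => T, ∏ j : Fin K, ∏ ε : E, wgt pr qr (h j ε))
            = ∏ _j : Fin K, ∑ c ∈ T, ∏ ε : E, wgt pr qr (c ε) from
          (Finset.prod_univ_sum (fun _ : Fin K => T)
            (fun _ c => ∏ ε : E, wgt pr qr (c ε))).symm]
      have hone : ∑ c ∈ T, ∏ ε : E, wgt pr qr (c ε) = 1 - ENNReal.ofReal qr ^ 2 ^ (d - 1) := by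
        have htot : ∑ c : E → Fin 3, ∏ ε : E, wgt pr qr (c ε) = 1 := by
          calc ∑ c : E → Fin 3, ∏ ε : E, wgt pr qr (c ε)
              = ∑ c ∈ Fintype.piFinset (fun _ : E => (Finset.univ : Finset (Fin 3))),
                  ∏ ε : E, wgt pr qr (c ε) := by rw [Fintype.piFinset_univ]
            _ = ∏ _ε : E, ∑ v : Fin 3, wgt pr qr v :=
                (Finset.prod_univ_sum (fun _ : E => (Finset.univ : Finset (Fin 3)))
                  (fun _ v => wgt pr qr v)).symm
            _ = 1 := by
                rw [Finset.prod_congr rfl fun ε _ => wgt_total hp0 hq0 hpq]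
                simp
        have hsplit := Finset.sum_filter_add_sum_filter_not Finset.univ
          (fun c : E → Fin 3 => ∃ ε : E, c ε ≠ 0) (fun c => ∏ ε : E, wgt pr qr (c ε))
        have hzero : Finset.univ.filter (fun c : E → Fin 3 => ¬ ∃ ε : E, c ε ≠ 0) =
            {fun _ => 0} := by
          ext c
          simp only [Finset.mem_filter, Finset.mem_univ, true_and, Finset.mem_singleton,
            not_exists, not_not]
          constructor
          · intro h; funext ε; exact h ε
          · intro h ε; rw [h]
        rw [hzero] at hsplit
        have hz : ∑ c ∈ ({fun _ => 0} : Finset (E → Fin 3)), ∏ ε : E, wgt pr qr (c ε) =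
            ENNReal.ofReal qr ^ 2 ^ (d - 1) := by
          rw [Finset.sum_singleton]
          have : ∀ ε : E, wgt pr qr ((fun _ => (0 : Fin 3)) ε) = ENNReal.ofReal qr := fun ε => rfl
          rw [Finset.prod_congr rfl fun ε _ => this ε, Finset.prod_const, Finset.card_univ]
          congr 1
          simp [E]
        rw [hz] at hsplit
        rw [htot] at hsplit
        exact ENNReal.eq_sub_of_add_eq (by
          exact ENNReal.pow_ne_top ENNReal.ofReal_ne_top) hsplit
      rw [hone, Finset.prod_const, Finset.card_univ, Fintype.card_fin]
      have hq1 : qr ≤ 1 := by linarith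
      rw [← ENNReal.ofReal_pow hq0, ← ENNReal.ofReal_one, ← ENNReal.ofReal_sub _ (by positivity)]
      exact (ENNReal.ofReal_pow (sub_nonneg.mpr (pow_le_one₀ hq0 hq1)) K).symm

/-- If `p, q → 0` with `p = o(q^(2^d))`, then for polluted bootstrap percolation on
`ℤ^d` with threshold `r = d`: with probability tending to `1` the blocked-tube event
occurs; on that event the origin never becomes occupied; and hence the probability
that the origin is eventually occupied tends to `0`. -/
theorem threshold_d_blocked {d : ℕ} (hd : 2 ≤ d)
    {Ω : Type*} [MeasurableSpace Ω]
    (μ : ℕ → Measure Ω) (hμ : ∀ n, IsProbabilityMeasure (μ n))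
    (state : ℕ → SiteD d → Ω → Fin 3)
    (p q : ℕ → ℝ)
    (hp0 : ∀ n, 0 ≤ p n) (hq0 : ∀ n, 0 < q n) (hpq : ∀ n, p n + q n ≤ 1)
    (hp : Tendsto p atTop (𝓝 0)) (hq : Tendsto q atTop (𝓝 0))
    (hlittle : p =o[atTop] fun n => q n ^ 2 ^ d)
    (hprod : ∀ n : ℕ, ∀ F : Finset (SiteD d), ∀ f : SiteD d → Fin 3,
      μ n {ω | ∀ x ∈ F, state n x ω = f x} =
        ∏ x ∈ F,
          (if f x = 0 then ENNReal.ofReal (q n)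
           else if f x = 1 then ENNReal.ofReal (p n)
           else ENNReal.ofReal (1 - p n - q n))) :
    Tendsto (fun n => μ n {ω | TubeEvent d hd (fun x => state n x ω)}) atTop (𝓝 1) ∧
    (∀ n : ℕ, ∀ ω : Ω, TubeEvent d hd (fun x => state n x ω) →
      ¬ ∃ t : ℕ, (0 : SiteD d) ∈
        occSeqD (StdRule d) {x | state n x ω = 0} {x | state n x ω = 1} t) ∧
    Tendsto (fun n => μ n {ω | ∃ t : ℕ, (0 : SiteD d) ∈
        occSeqD (StdRule d) {x | state n x ω = 0} {x | state n x ω = 1} t})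
      atTop (𝓝 0) := by
  classical
  have hdl : d - 1 < d := by omega
  have hq1 : ∀ n, q n ≤ 1 := fun n => by have h1 := hpq n; have h2 := hp0 n; linarith
  set Kf : ℕ → ℕ := fun n => ⌈(q n)⁻¹ ^ 2 ^ d⌉₊ with hKf
  set Bn : ℕ → ℝ := fun n =>
    (2 * (Kf n : ℝ) + 1) * 2 ^ (d - 1) * p n + 2 * (1 - q n ^ 2 ^ (d - 1)) ^ (Kf n) with hBnDef
  set Box : ℕ → Finset (SiteD d) :=
    fun n => (Finset.Icc (-(Kf n : ℤ)) (Kf n)).biUnion (slab d) with hBoxDef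
  set G : ℕ → Set Ω := fun n => {ω |
    (∀ x ∈ Box n, state n x ω ≠ 1) ∧
    (∃ j : Fin (Kf n), ∀ x ∈ slab d (-(j : ℤ) - 1), state n x ω = 0) ∧
    (∃ j : Fin (Kf n), ∀ x ∈ slab d ((j : ℤ) + 1), state n x ω = 0)} with hGDef
  have hprod' : ∀ n (F : Finset (SiteD d)) (f : SiteD d → Fin 3),
      μ n {ω | ∀ x ∈ F, state n x ω = f x} = ∏ x ∈ F, wgt (p n) (q n) (f x) :=
    fun n F f => hprod n F f
  -- the good event implies the tube event
  have hGsub : ∀ n ω, ω ∈ G n → TubeEvent d hd (fun x => state n x ω) := by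
    intro n ω hω
    obtain ⟨h1, ⟨j0, hj0⟩, ⟨j1, hj1⟩⟩ := hω
    refine ⟨-(j0 : ℤ) - 1, (j1 : ℤ) + 1, by omega, by omega, ?_, ?_⟩
    · rintro x ⟨hx1, hx2, hx3⟩
      have hx2' : -(j0 : ℤ) - 1 ≤ x ⟨d - 1, hdl⟩ := hx2
      have hx3' : x ⟨d - 1, hdl⟩ ≤ (j1 : ℤ) + 1 := hx3
      refine h1 x ?_
      refine Finset.mem_biUnion.mpr ⟨x ⟨d - 1, hdl⟩, Finset.mem_Icc.mpr ⟨?_, ?_⟩,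
        (mem_slab (by omega)).mpr ⟨hx1, rfl⟩⟩
      · have := j0.isLt; omega
      · have := j1.isLt; omega
    · rintro x ⟨hx1, hx2 | hx2⟩
      · exact hj0 x ((mem_slab (by omega)).mpr ⟨hx1, hx2⟩)
      · exact hj1 x ((mem_slab (by omega)).mpr ⟨hx1, hx2⟩)
  -- single site probability
  have hsingle : ∀ n (x : SiteD d), μ n {ω | state n x ω = 1} = ENNReal.ofReal (p n) := by
    intro n x
    have hset : {ω | state n x ω = 1} =
        {ω | ∀ y ∈ ({x} : Finset (SiteD d)), state n y ω = (fun _ => (1 : Fin 3)) y} := by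
      ext ω; simp
    rw [hset, hprod' n {x} (fun _ => 1), Finset.prod_singleton]
    simp [wgt]
  -- bound on the complement of the good event
  have hGc : ∀ n, μ n (G n)ᶜ ≤ ENNReal.ofReal (Bn n) := by
    intro n
    set A1 : Set Ω := {ω | ∃ x ∈ Box n, state n x ω = 1} with hA1
    set A2 : Set Ω := {ω | ∀ j : Fin (Kf n), ∃ x ∈ slab d (-(j : ℤ) - 1), state n x ω ≠ 0}
      with hA2
    set A3 : Set Ω := {ω | ∀ j : Fin (Kf n), ∃ x ∈ slab d ((j : ℤ) + 1), state n x ω ≠ 0}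
      with hA3
    have hsubc : (G n)ᶜ ⊆ A1 ∪ (A2 ∪ A3) := by
      intro ω hω
      simp only [Set.mem_union]
      by_contra hno
      push_neg at hno
      obtain ⟨hn1, hn2, hn3⟩ := hno
      apply hω
      refine ⟨fun x hx h1 => hn1 ⟨x, hx, h1⟩, ?_, ?_⟩
      · simp only [hA2, Set.mem_setOf_eq, not_forall] at hn2
        obtain ⟨j, hj⟩ := hn2
        push_neg at hj
        exact ⟨j, fun x hx => hj x hx⟩
      · simp only [hA3, Set.mem_setOf_eq, not_forall] at hn3
        obtain ⟨j, hj⟩ := hn3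
        push_neg at hj
        exact ⟨j, fun x hx => hj x hx⟩
    have hcard : (Box n).card ≤ (2 * Kf n + 1) * 2 ^ (d - 1) := by
      refine le_trans (Finset.card_biUnion_le) ?_
      have hc : ∀ z ∈ Finset.Icc (-(Kf n : ℤ)) (Kf n), (slab d z).card = 2 ^ (d - 1) :=
        fun z _ => card_slab (by omega) z
      rw [Finset.sum_congr rfl hc, Finset.sum_const, smul_eq_mul]
      have : (Finset.Icc (-(Kf n : ℤ)) (Kf n)).card = 2 * Kf n + 1 := by
        rw [Int.card_Icc]
        omega
      rw [this]
    have hbound1 : μ n A1 ≤ ENNReal.ofReal (((2 * Kf n + 1) * 2 ^ (d - 1) : ℕ) * p n) := by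
      have hun : A1 = ⋃ x ∈ Box n, {ω | state n x ω = 1} := by
        ext ω; simp [hA1]
      rw [hun]
      refine le_trans (measure_biUnion_finset_le _ _) ?_
      rw [Finset.sum_congr rfl (fun x _ => hsingle n x), Finset.sum_const, nsmul_eq_mul]
      calc ((Box n).card : ENNReal) * ENNReal.ofReal (p n)
          ≤ (((2 * Kf n + 1) * 2 ^ (d - 1) : ℕ) : ENNReal) * ENNReal.ofReal (p n) := by
            gcongr
        _ = ENNReal.ofReal (((2 * Kf n + 1) * 2 ^ (d - 1) : ℕ) * p n) := by
            rw [← ENNReal.ofReal_natCast, ← ENNReal.ofReal_mul (Nat.cast_nonneg _)]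
    have hbound2 : μ n A2 ≤ ENNReal.ofReal ((1 - q n ^ 2 ^ (d - 1)) ^ (Kf n)) := by
      refine slab_bound (by omega) (μ n) (state n) (p n) (q n) (hp0 n) (le_of_lt (hq0 n))
        (hpq n) (hprod' n) (Kf n) (fun j => -(j : ℤ) - 1) ?_
      intro a b h
      have h2 : -(a : ℤ) - 1 = -(b : ℤ) - 1 := h
      exact Fin.ext (by omega)
    have hbound3 : μ n A3 ≤ ENNReal.ofReal ((1 - q n ^ 2 ^ (d - 1)) ^ (Kf n)) := by
      refine slab_bound (by omega) (μ n) (state n) (p n) (q n) (hp0 n) (le_of_lt (hq0 n))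
        (hpq n) (hprod' n) (Kf n) (fun j => (j : ℤ) + 1) ?_
      intro a b h
      have h2 : (a : ℤ) + 1 = (b : ℤ) + 1 := h
      exact Fin.ext (by omega)
    have hpow_nonneg : (0:ℝ) ≤ (1 - q n ^ 2 ^ (d - 1)) ^ (Kf n) := by
      have h1 : q n ^ 2 ^ (d - 1) ≤ 1 := pow_le_one₀ (le_of_lt (hq0 n)) (hq1 n)
      exact pow_nonneg (by linarith) _
    calc μ n (G n)ᶜ ≤ μ n (A1 ∪ (A2 ∪ A3)) := measure_mono hsubc
      _ ≤ μ n A1 + (μ n A2 + μ n A3) :=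
          le_trans (measure_union_le _ _) (by gcongr; exact measure_union_le _ _)
      _ ≤ ENNReal.ofReal (((2 * Kf n + 1) * 2 ^ (d - 1) : ℕ) * p n) +
          (ENNReal.ofReal ((1 - q n ^ 2 ^ (d - 1)) ^ (Kf n)) + ENNReal.ofReal ((1 - q n ^ 2 ^ (d - 1)) ^ (Kf n))) := by
          gcongr
      _ = ENNReal.ofReal ((((2 * Kf n + 1) * 2 ^ (d - 1) : ℕ) : ℝ) * p n +
            ((1 - q n ^ 2 ^ (d - 1)) ^ (Kf n) + (1 - q n ^ 2 ^ (d - 1)) ^ (Kf n))) := by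
          rw [ENNReal.ofReal_add (by have := hp0 n; positivity) (by positivity),
            ENNReal.ofReal_add hpow_nonneg hpow_nonneg]
      _ ≤ ENNReal.ofReal (Bn n) := by
          refine ENNReal.ofReal_le_ofReal ?_
          simp only [hBnDef]
          push_cast
          ring_nf
          try exact le_refl _
  -- the deterministic part
  have part2 : ∀ n ω, TubeEvent d hd (fun x => state n x ω) →
      ¬ ∃ t : ℕ, (0 : SiteD d) ∈
        occSeqD (StdRule d) {x | state n x ω = 0} {x | state n x ω = 1} t := by
    rintro n ω ⟨M, N, hM, hN, hO', hC'⟩ ⟨t, ht⟩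
    refine tube_blocked hd {x | state n x ω = 0} {x | state n x ω = 1} M N hM hN
      ?_ ?_ ?_ t 0 (fun i _ => Or.inl rfl) ?_ ?_ ht
    · intro x hx1 hx2
      simp only [Set.mem_setOf_eq] at hx1 hx2
      rw [hx1] at hx2
      exact absurd hx2 (by decide)
    · intro x h1 h2 h3 hmem
      exact hO' x ⟨h1, h2, h3⟩ hmem
    · intro x h1 h2
      exact hC' x ⟨h1, h2⟩
    · exact hM
    · exact hN
  -- convergence of the error bound
  have hqm0 : Tendsto (fun n => q n ^ 2 ^ (d - 1)) atTop (𝓝 0) := by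
    have h := hq.pow (2 ^ (d - 1))
    have h0 : (0:ℝ) ^ 2 ^ (d - 1) = 0 := zero_pow (by positivity)
    rw [h0] at h
    exact h
  have hqmpos : ∀ n, 0 < q n ^ 2 ^ (d - 1) := fun n => pow_pos (hq0 n) (2 ^ (d - 1))
  have hinv : Tendsto (fun n => (q n ^ 2 ^ (d - 1))⁻¹) atTop atTop := by
    refine Filter.Tendsto.inv_tendsto_nhdsGT_zero ?_
    exact tendsto_nhdsWithin_of_tendsto_nhds_of_eventually_within _ hqm0
      (Filter.Eventually.of_forall fun n => hqmpos n)
  have hdiv : Tendsto (fun n => p n / q n ^ 2 ^ d) atTop (𝓝 0) := by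
    rw [Asymptotics.isLittleO_iff_tendsto (fun n h => absurd h (pow_ne_zero _ (ne_of_gt (hq0 n))))] at hlittle
    exact hlittle
  have hpow2d : ∀ n, (q n)⁻¹ ^ 2 ^ d = ((q n ^ 2 ^ (d - 1)) ^ 2)⁻¹ := by
    intro n
    rw [inv_pow, ← pow_mul]
    congr 2
    rw [← pow_succ]
    congr 1
    omega
  have hpow2d' : ∀ n, ((q n ^ 2 ^ (d - 1)) ^ 2)⁻¹ = (q n ^ 2 ^ d)⁻¹ := by
    intro n
    rw [← hpow2d n, inv_pow]
  have hK_ge : ∀ n, ((q n ^ 2 ^ (d - 1)) ^ 2)⁻¹ ≤ (Kf n : ℝ) := by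
    intro n
    rw [← hpow2d n]
    exact Nat.le_ceil _
  have hK_le : ∀ n, (Kf n : ℝ) ≤ ((q n ^ 2 ^ (d - 1)) ^ 2)⁻¹ + 1 := by
    intro n
    rw [← hpow2d n]
    exact le_of_lt (Nat.ceil_lt_add_one (by have := hq0 n; positivity))
  have hterm1 : Tendsto (fun n => (2 * (Kf n : ℝ) + 1) * 2 ^ (d - 1) * p n) atTop (𝓝 0) := by
    have hU : Tendsto (fun n => (2 : ℝ) ^ d * (p n / q n ^ 2 ^ d) + 3 * 2 ^ (d - 1) * p n)
        atTop (𝓝 0) := by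
      have h1 := hdiv.const_mul ((2 : ℝ) ^ d)
      have h2 := hp.const_mul ((3 : ℝ) * 2 ^ (d - 1))
      simpa using h1.add h2
    refine squeeze_zero (fun n => by have := hp0 n; positivity) (fun n => ?_) hU
    have h1 : (2 * (Kf n : ℝ) + 1) ≤ 2 * ((q n ^ 2 ^ (d - 1)) ^ 2)⁻¹ + 3 := by
      have := hK_le n; linarith
    calc (2 * (Kf n : ℝ) + 1) * 2 ^ (d - 1) * p n
        = (2 * (Kf n : ℝ) + 1) * (2 ^ (d - 1) * p n) := by ring
      _ ≤ (2 * ((q n ^ 2 ^ (d - 1)) ^ 2)⁻¹ + 3) * (2 ^ (d - 1) * p n) := by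
          refine mul_le_mul_of_nonneg_right h1 (by have := hp0 n; positivity)
      _ = 2 ^ d * (p n / q n ^ 2 ^ d) + 3 * 2 ^ (d - 1) * p n := by
          rw [div_eq_mul_inv, hpow2d' n,
            show (2:ℝ) ^ d = 2 * 2 ^ (d - 1) by rw [← pow_succ']; congr 1; omega]
          ring
  have hterm2 : Tendsto (fun n => 2 * (1 - q n ^ 2 ^ (d - 1)) ^ (Kf n)) atTop (𝓝 0) := by
    have hE : Tendsto (fun n => 2 * Real.exp (-(q n ^ 2 ^ (d - 1))⁻¹)) atTop (𝓝 0) := by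
      have h1 : Tendsto (fun n => -(q n ^ 2 ^ (d - 1))⁻¹) atTop atBot :=
        Filter.tendsto_neg_atTop_atBot.comp hinv
      have h2 := Real.tendsto_exp_atBot.comp h1
      simpa using h2.const_mul (2 : ℝ)
    refine squeeze_zero (fun n => ?_) (fun n => ?_) hE
    · have h1 : q n ^ 2 ^ (d - 1) ≤ 1 := pow_le_one₀ (le_of_lt (hq0 n)) (hq1 n)
      have h2 : (0:ℝ) ≤ (1 - q n ^ 2 ^ (d - 1)) ^ (Kf n) := pow_nonneg (by linarith) _
      linarith
    · have ha1 : q n ^ 2 ^ (d - 1) ≤ 1 := pow_le_one₀ (le_of_lt (hq0 n)) (hq1 n)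
      have hstep1 : (1 - q n ^ 2 ^ (d - 1)) ^ (Kf n) ≤ Real.exp (-(q n ^ 2 ^ (d - 1))) ^ (Kf n) := by
        refine pow_le_pow_left₀ (by linarith) ?_ (Kf n)
        have := Real.add_one_le_exp (-(q n ^ 2 ^ (d - 1)))
        linarith
      have hstep2 : Real.exp (-(q n ^ 2 ^ (d - 1))) ^ (Kf n) = Real.exp ((Kf n : ℝ) * (-(q n ^ 2 ^ (d - 1)))) := by
        rw [← Real.exp_nat_mul]
      have hstep3 : Real.exp ((Kf n : ℝ) * (-(q n ^ 2 ^ (d - 1)))) ≤ Real.exp (-(q n ^ 2 ^ (d - 1))⁻¹) := by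
        refine Real.exp_le_exp.mpr ?_
        have h4 : ((q n ^ 2 ^ (d - 1)) ^ 2)⁻¹ * (q n ^ 2 ^ (d - 1)) ≤ (Kf n : ℝ) * (q n ^ 2 ^ (d - 1)) :=
          mul_le_mul_of_nonneg_right (hK_ge n) (le_of_lt (hqmpos n))
        have h5 : ((q n ^ 2 ^ (d - 1)) ^ 2)⁻¹ * (q n ^ 2 ^ (d - 1)) = (q n ^ 2 ^ (d - 1))⁻¹ := by
          rw [sq, mul_inv, mul_assoc, inv_mul_cancel₀ (ne_of_gt (hqmpos n)), mul_one]
        rw [h5] at h4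
        linarith
      linarith [hstep1, hstep2 ▸ hstep3]
  have hBn0 : Tendsto Bn atTop (𝓝 0) := by
    simpa using hterm1.add hterm2
  have hBn0' : Tendsto (fun n => ENNReal.ofReal (Bn n)) atTop (𝓝 0) := by
    have := (ENNReal.continuous_ofReal.tendsto 0).comp hBn0
    simpa [Function.comp_def] using this
  -- Part 1
  have hup : ∀ n, μ n {ω | TubeEvent d hd (fun x => state n x ω)} ≤ 1 := by
    intro n
    haveI := hμ n
    exact prob_le_one
  have hlow : ∀ n, 1 - ENNReal.ofReal (Bn n) ≤
      μ n {ω | TubeEvent d hd (fun x => state n x ω)} := by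
    intro n
    haveI := hμ n
    rw [tsub_le_iff_right]
    calc (1 : ENNReal) = μ n Set.univ := measure_univ.symm
      _ = μ n (G n ∪ (G n)ᶜ) := by rw [Set.union_compl_self]
      _ ≤ μ n (G n) + μ n (G n)ᶜ := measure_union_le _ _
      _ ≤ μ n {ω | TubeEvent d hd (fun x => state n x ω)} + ENNReal.ofReal (Bn n) := by
          gcongr
          · exact fun ω hω => hGsub n ω hω
          · exact hGc n
  have hlowlim : Tendsto (fun n => 1 - ENNReal.ofReal (Bn n)) atTop (𝓝 1) := by
    have := ENNReal.Tendsto.sub (tendsto_const_nhds (x := (1 : ENNReal))) hBn0'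
      (Or.inl ENNReal.one_ne_top)
    simpa using this
  refine ⟨tendsto_of_tendsto_of_tendsto_of_le_of_le hlowlim tendsto_const_nhds hlow hup,
    part2, ?_⟩
  -- Part 3
  have hocc : ∀ n, μ n {ω | ∃ t : ℕ, (0 : SiteD d) ∈
      occSeqD (StdRule d) {x | state n x ω = 0} {x | state n x ω = 1} t} ≤
      ENNReal.ofReal (Bn n) := by
    intro n
    refine le_trans (measure_mono ?_) (hGc n)
    intro ω hω hωG
    exact part2 n ω (hGsub n ω hωG) hω
  exact tendsto_of_tendsto_of_tendsto_of_le_of_le tendsto_const_nhds hBn0'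
    (fun n => zero_le) hocc
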